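/- Suppose r, θ : ℝ → ℝ are twice differentiable with r > 0 and satisfy r'' − r·θ'² = 0 and r·θ'' + 2·r'·θ' = 1/r³. Then I(t) = (1/2)(r(t)²·θ'(t))² − θ(t) is constant. -/

import Mathlib

/-- for planar motion under the transverse force `1/r³`,
`I(t) = (1/2)(r² θ')² − θ` is constant. -/
theorem lrr_invariant_mu_neg3
    (r θ : ℝ → ℝ)
    (hr : ContDiff ℝ 2 r) (hθ : ContDiff ℝ 2 θ)
    (hrpos : ∀ t, 0 < r t)
    (hrad : ∀ t, deriv (deriv r) t - r t * (deriv θ t) ^ 2 = 0)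
    (hang : ∀ t, r t * deriv (deriv θ) t + 2 * deriv r t * deriv θ t
      = 1 / (r t) ^ 3) :
    ∀ t₁ t₂ : ℝ,
      (1/2) * ((r t₁) ^ 2 * deriv θ t₁) ^ 2 - θ t₁
        = (1/2) * ((r t₂) ^ 2 * deriv θ t₂) ^ 2 - θ t₂ := by
  have hrd : Differentiable ℝ r := hr.differentiable two_ne_zero
  have hθd : Differentiable ℝ θ := hθ.differentiable two_ne_zero
  have hrd' : Differentiable ℝ (deriv r) :=
    (hr.iterate_deriv' 1 1).differentiable one_ne_zero
  have hθd' : Differentiable ℝ (deriv θ) :=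
    (hθ.iterate_deriv' 1 1).differentiable one_ne_zero
  have key : ∀ t, HasDerivAt
      (fun t => (1/2) * ((r t) ^ 2 * deriv θ t) ^ 2 - θ t) 0 t := by
    intro t
    have h1 : HasDerivAt r (deriv r t) t := (hrd t).hasDerivAt
    have h2 : HasDerivAt θ (deriv θ t) t := (hθd t).hasDerivAt
    have h3 : HasDerivAt (deriv θ) (deriv (deriv θ) t) t := (hθd' t).hasDerivAt
    have hg : HasDerivAt (fun t => (r t) ^ 2 * deriv θ t)
        ((2 * r t ^ 1 * deriv r t) * deriv θ t + (r t) ^ 2 * deriv (deriv θ) t) t :=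
      ((h1.pow 2).mul h3)
    have hf : HasDerivAt (fun t => (1/2) * ((r t) ^ 2 * deriv θ t) ^ 2 - θ t)
        ((1/2) * (2 * ((r t) ^ 2 * deriv θ t) ^ 1 *
          ((2 * r t ^ 1 * deriv r t) * deriv θ t + (r t) ^ 2 * deriv (deriv θ) t)) - deriv θ t) t :=
      ((hg.pow 2).const_mul (1/2)).sub h2
    convert hf using 1
    have hrne : r t ≠ 0 := (hrpos t).ne'
    have h := hang t
    field_simp at h ⊢
    linear_combination (-deriv θ t) * h
  intro t₁ t₂
  have : ∀ t, deriv (fun t => (1/2) * ((r t) ^ 2 * deriv θ t) ^ 2 - θ t) t = 0 :=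
    fun t => (key t).deriv
  have hconst := is_const_of_deriv_eq_zero (f := fun t => (1/2) * ((r t) ^ 2 * deriv θ t) ^ 2 - θ t)
    (fun t => (key t).differentiableAt) this t₁ t₂
  simpa using hconst
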